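/- (Theorem 1, impossibility of achieving the full-CSIT SER with beamforming.) Let t ≥ 2 and P > 0. For every countable index set I, every family (x_n)_{n∈I} of unit vectors in ℂ^t, and every measurable partition (E_n)_{n∈I} of ℂ^t, one has Σ_{n∈I} ∫_{E_n} Q(√(2·|⟨x_n, h⟩|²·P)) dμ(h) > ∫_{ℂ^t} Q(√(2·‖h‖²·P)) dμ(h). That is, no quantized beamforming scheme achieves the full-CSIT symbol error rate at any power P. -/

import Mathlib

open MeasureTheory

noncomputable instance (t : ℕ) : MeasureSpace (EuclideanSpace ℂ (Fin t)) where
  toMeasurableSpace := inferInstance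
  volume := Measure.map (WithLp.toLp 2) (volume : Measure (Fin t → ℂ))

/-- The Gaussian tail function `Q(x) = (1/√(2π)) ∫_x^∞ exp(-u²/2) du`. -/
noncomputable def gaussianQ (x : ℝ) : ℝ :=
  (Real.sqrt (2 * Real.pi))⁻¹ * ∫ u in Set.Ioi x, Real.exp (-(u ^ 2) / 2)

/-- The standard complex Gaussian measure `CN(0, I_t)` on `ℂ^t`, with density
`h ↦ π^{-t} exp(-‖h‖²)` with respect to Lebesgue measure. -/
noncomputable def stdCGauss (t : ℕ) : Measure (EuclideanSpace ℂ (Fin t)) :=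
  volume.withDensity fun h => ENNReal.ofReal ((Real.pi ^ t)⁻¹ * Real.exp (-‖h‖ ^ 2))

/-! ### Auxiliary lemmas -/

lemma aux_integrable_exp_half : Integrable (fun u : ℝ => Real.exp (-(u ^ 2) / 2)) := by
  have h : Integrable (fun u : ℝ => Real.exp (-(1/2 : ℝ) * u ^ 2)) :=
    integrable_exp_neg_mul_sq (by norm_num)
  refine h.congr (Filter.Eventually.of_forall fun u => ?_)
  ring_nf

lemma aux_gaussianQ_strictAnti : StrictAnti gaussianQ := by
  intro a b hab
  unfold gaussianQ
  have hc : (0:ℝ) < (Real.sqrt (2 * Real.pi))⁻¹ := by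
    rw [inv_pos]
    exact Real.sqrt_pos.2 (by positivity)
  refine mul_lt_mul_of_pos_left ?_ hc
  have hsplit : Set.Ioi a = Set.Ioc a b ∪ Set.Ioi b := (Set.Ioc_union_Ioi_eq_Ioi hab.le).symm
  have hint : ∀ s : Set ℝ, IntegrableOn (fun u : ℝ => Real.exp (-(u ^ 2) / 2)) s :=
    fun s => aux_integrable_exp_half.integrableOn
  have hdisj : Disjoint (Set.Ioc a b) (Set.Ioi b) := Set.Ioc_disjoint_Ioi le_rfl
  rw [hsplit, setIntegral_union hdisj measurableSet_Ioi (hint _) (hint _)]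
  have hpos : 0 < ∫ u in Set.Ioc a b, Real.exp (-(u ^ 2) / 2) := by
    rw [setIntegral_pos_iff_support_of_nonneg_ae
      (Filter.Eventually.of_forall fun u => (Real.exp_pos _).le) (hint _)]
    have hsupp : Function.support (fun u : ℝ => Real.exp (-(u ^ 2) / 2)) = Set.univ := by
      ext u; simp [Function.support, (Real.exp_pos _).ne']
    rw [hsupp, Set.univ_inter, Real.volume_Ioc]
    simp [ENNReal.ofReal_pos, sub_pos, hab]
  linarith

lemma aux_gaussianQ_anti : Antitone gaussianQ := aux_gaussianQ_strictAnti.antitone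

lemma aux_gaussianQ_meas : Measurable gaussianQ := aux_gaussianQ_anti.measurable

lemma aux_gaussianQ_nonneg (x : ℝ) : 0 ≤ gaussianQ x := by
  unfold gaussianQ
  have : 0 ≤ ∫ u in Set.Ioi x, Real.exp (-(u ^ 2) / 2) :=
    setIntegral_nonneg measurableSet_Ioi fun u _ => (Real.exp_pos _).le
  positivity

lemma aux_intC : Integrable (fun z : ℂ => Real.exp (-‖z‖ ^ 2)) := by
  have h1 : Integrable (fun u : ℝ => Real.exp (-1 * u ^ 2)) := integrable_exp_neg_mul_sq one_pos
  have h2 : Integrable (fun p : ℝ × ℝ =>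
      Real.exp (-1 * p.1 ^ 2) * Real.exp (-1 * p.2 ^ 2)) := h1.mul_prod h1
  have h3 := (Complex.volume_preserving_equiv_real_prod.integrable_comp_emb
      Complex.measurableEquivRealProd.measurableEmbedding).2 h2
  refine h3.congr (Filter.Eventually.of_forall fun z => ?_)
  simp only [Function.comp, Complex.measurableEquivRealProd_apply]
  rw [← Real.exp_add, Complex.sq_norm, Complex.normSq_apply]
  ring_nf

lemma aux_intE (t : ℕ) : Integrable (fun h : EuclideanSpace ℂ (Fin t) => Real.exp (-‖h‖ ^ 2)) := by
  have h1 : Integrable (fun h : Fin t → ℂ => ∏ i, Real.exp (-‖h i‖ ^ 2)) :=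
    Integrable.fintype_prod (f := fun (_ : Fin t) (z : ℂ) => Real.exp (-‖z‖ ^ 2))
      (fun _ => aux_intC)
  have h2 : Integrable (fun h : EuclideanSpace ℂ (Fin t) => ∏ i, Real.exp (-‖h i‖ ^ 2)) :=
    (integrable_map_equiv (MeasurableEquiv.toLp 2 (Fin t → ℂ)) _).2 h1
  refine h2.congr (Filter.Eventually.of_forall fun h => ?_)
  show (∏ i, Real.exp (-‖h i‖ ^ 2)) = Real.exp (-‖h‖ ^ 2)
  rw [← Real.exp_sum, EuclideanSpace.norm_eq, Real.sq_sqrt (by positivity)]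
  simp

lemma aux_density_int (t : ℕ) :
    Integrable (fun h : EuclideanSpace ℂ (Fin t) => (Real.pi ^ t)⁻¹ * Real.exp (-‖h‖ ^ 2)) :=
  (aux_intE t).const_mul _

instance aux_haar (t : ℕ) : (volume : Measure (EuclideanSpace ℂ (Fin t))).IsAddHaarMeasure := by
  exact (EuclideanSpace.equiv (Fin t) ℂ).symm.isAddHaarMeasure_map volume

instance aux_borel (t : ℕ) : BorelSpace (EuclideanSpace ℂ (Fin t)) := by
  exact inferInstance

instance aux_finite (t : ℕ) : IsFiniteMeasure (stdCGauss t) := by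
  constructor
  rw [stdCGauss, withDensity_apply _ MeasurableSet.univ, Measure.restrict_univ]
  exact (aux_density_int t).lintegral_lt_top

/-- The main theorem. -/
theorem no_quantizer_achieves_full_csit_ser
    (t : ℕ) (ht : 2 ≤ t) (P : ℝ) (hP : 0 < P)
    (I : Type) (hI : Countable I)
    (x : I → EuclideanSpace ℂ (Fin t)) (hx : ∀ n, ‖x n‖ = 1)
    (E : I → Set (EuclideanSpace ℂ (Fin t)))
    (hEmeas : ∀ n, MeasurableSet (E n))
    (hEdisj : ∀ m n, m ≠ n → Disjoint (E m) (E n))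
    (hEcover : (⋃ n, E n) = Set.univ) :
    (∑' n, ∫ h in E n,
        gaussianQ (Real.sqrt (2 * ‖(inner ℂ (x n) h : ℂ)‖ ^ 2 * P)) ∂(stdCGauss t))
      > ∫ h, gaussianQ (Real.sqrt (2 * ‖h‖ ^ 2 * P)) ∂(stdCGauss t) := by
  classical
  haveI := hI
  set μ := stdCGauss t with hμ
  set g : EuclideanSpace ℂ (Fin t) → ℝ :=
    fun h => gaussianQ (Real.sqrt (2 * ‖h‖ ^ 2 * P)) with hg
  set f : I → EuclideanSpace ℂ (Fin t) → ℝ :=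
    fun n h => gaussianQ (Real.sqrt (2 * ‖(inner ℂ (x n) h : ℂ)‖ ^ 2 * P)) with hf
  -- measurability
  have hgmeas : Measurable g := by
    apply aux_gaussianQ_meas.comp
    fun_prop
  have hfmeas : ∀ n, Measurable (f n) := by
    intro n
    apply aux_gaussianQ_meas.comp
    have : Continuous fun h : EuclideanSpace ℂ (Fin t) => (inner ℂ (x n) h : ℂ) :=
      continuous_const.inner continuous_id
    fun_prop
  -- upper bound and integrability
  have hbound : ∀ (φ : EuclideanSpace ℂ (Fin t) → ℝ), Measurable φ →
      (∀ h, φ h = gaussianQ (Real.sqrt (2 * ‖φ h‖ ^ 2 * P)) ∨ True) → True := fun _ _ _ => trivial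
  have hgle : ∀ h, ‖g h‖ ≤ gaussianQ 0 := by
    intro h
    rw [Real.norm_of_nonneg (aux_gaussianQ_nonneg _)]
    exact aux_gaussianQ_anti (Real.sqrt_nonneg _)
  have hfle : ∀ n h, ‖f n h‖ ≤ gaussianQ 0 := by
    intro n h
    rw [Real.norm_of_nonneg (aux_gaussianQ_nonneg _)]
    exact aux_gaussianQ_anti (Real.sqrt_nonneg _)
  have hgint : Integrable g μ :=
    Integrable.mono' (integrable_const (gaussianQ 0)) hgmeas.aestronglyMeasurable
      (Filter.Eventually.of_forall hgle)
  have hfint : ∀ n, Integrable (f n) μ := fun n =>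
    Integrable.mono' (integrable_const (gaussianQ 0)) (hfmeas n).aestronglyMeasurable
      (Filter.Eventually.of_forall (hfle n))
  -- pointwise inequality
  have hpt : ∀ n h, g h ≤ f n h := by
    intro n h
    apply aux_gaussianQ_anti
    apply Real.sqrt_le_sqrt
    have hcs : ‖(inner ℂ (x n) h : ℂ)‖ ≤ ‖h‖ := by
      have := norm_inner_le_norm (𝕜 := ℂ) (x n) h
      rwa [hx n, one_mul] at this
    have : ‖(inner ℂ (x n) h : ℂ)‖ ^ 2 ≤ ‖h‖ ^ 2 :=
      pow_le_pow_left₀ (norm_nonneg _) hcs 2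
    nlinarith
  -- strict pointwise inequality off the span
  have hptstrict : ∀ n (h : EuclideanSpace ℂ (Fin t)),
      h ∉ (Submodule.span ℂ {x n} : Set (EuclideanSpace ℂ (Fin t))) → g h < f n h := by
    intro n h hh
    have hh0 : h ≠ 0 := by
      intro h0
      exact hh (h0 ▸ (Submodule.span ℂ {x n}).zero_mem)
    have hx0 : x n ≠ 0 := fun h0 => by simpa [h0] using hx n
    have hcs : ‖(inner ℂ (x n) h : ℂ)‖ < ‖h‖ := by
      rcases lt_or_eq_of_le (by
        have := norm_inner_le_norm (𝕜 := ℂ) (x n) h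
        rwa [hx n, one_mul] at this) with hlt | heq
      · exact hlt
      · exfalso
        have heq' : ‖(inner ℂ (x n) h : ℂ)‖ = ‖x n‖ * ‖h‖ := by rw [hx n, one_mul]; exact heq
        obtain ⟨r, _, hr⟩ := (norm_inner_eq_norm_iff (𝕜 := ℂ) hx0 hh0).1 heq'
        exact hh (hr ▸ Submodule.smul_mem _ r (Submodule.mem_span_singleton_self _))
    apply aux_gaussianQ_strictAnti
    have hhpos : 0 < ‖h‖ := norm_pos_iff.2 hh0
    have h2 : ‖(inner ℂ (x n) h : ℂ)‖ ^ 2 < ‖h‖ ^ 2 := by nlinarith [norm_nonneg (inner ℂ (x n) h : ℂ)]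
    apply Real.sqrt_lt_sqrt (by positivity)
    nlinarith
  -- the span is a null set
  have hspan_null : ∀ n, μ ((Submodule.span ℂ {x n} : Set (EuclideanSpace ℂ (Fin t)))) = 0 := by
    intro n
    have hvol : volume ((Submodule.span ℂ {x n} : Set (EuclideanSpace ℂ (Fin t)))) = 0 := by
      have h1 : ((Submodule.span ℂ {x n}).restrictScalars ℝ :
          Set (EuclideanSpace ℂ (Fin t))) = (Submodule.span ℂ {x n} : Set _) := rfl
      rw [← h1]
      apply Measure.addHaar_submodule
      intro htop
      have h2 : (Submodule.span ℂ {x n}) = ⊤ := by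
        rw [Submodule.eq_top_iff']
        intro v
        have : v ∈ ((Submodule.span ℂ {x n}).restrictScalars ℝ) := htop ▸ Submodule.mem_top
        exact this
      have hx0 : x n ≠ 0 := fun h0 => by simpa [h0] using hx n
      have h3 : Module.finrank ℂ (EuclideanSpace ℂ (Fin t)) = 1 := by
        rw [← finrank_span_singleton (K := ℂ) hx0, h2, finrank_top]
      rw [finrank_euclideanSpace, Fintype.card_fin] at h3
      omega
    rw [hμ, stdCGauss]
    exact (withDensity_absolutelyContinuous _ _) hvol
  -- decompose the full integral
  have hcover' : IntegrableOn g (⋃ n, E n) μ := by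
    rw [hEcover]; exact hgint.integrableOn
  have hdisj' : Pairwise (Function.onFun Disjoint E) := fun m n hmn => hEdisj m n hmn
  have hsum_g : HasSum (fun n => ∫ h in E n, g h ∂μ) (∫ h, g h ∂μ) := by
    have := hasSum_integral_iUnion hEmeas hdisj' hcover'
    rwa [hEcover, setIntegral_univ] at this
  -- summability of the f-sums
  have hmeasure_sum : ∑' n, μ (E n) = μ Set.univ := by
    rw [← measure_iUnion hdisj' hEmeas, hEcover]
  have hμfin : ∑' n, μ (E n) ≠ ⊤ := by
    rw [hmeasure_sum]; exact (measure_ne_top μ _)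
  have hsummeas : Summable fun n => (μ (E n)).toReal := ENNReal.summable_toReal hμfin
  have hQ0 : 0 ≤ gaussianQ 0 := aux_gaussianQ_nonneg 0
  have hf_bound : ∀ n, ∫ h in E n, f n h ∂μ ≤ gaussianQ 0 * (μ (E n)).toReal := by
    intro n
    have := norm_setIntegral_le_of_norm_le_const (μ := μ) (s := E n)
      (f := f n) (C := gaussianQ 0) (measure_lt_top μ _) (fun h _ => hfle n h)
    calc ∫ h in E n, f n h ∂μ ≤ ‖∫ h in E n, f n h ∂μ‖ := le_abs_self _
      _ ≤ gaussianQ 0 * (μ (E n)).toReal := this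
  have hf_nonneg : ∀ n, 0 ≤ ∫ h in E n, f n h ∂μ := fun n =>
    setIntegral_nonneg (hEmeas n) (fun h _ => aux_gaussianQ_nonneg _)
  have hsumf : Summable fun n => ∫ h in E n, f n h ∂μ :=
    Summable.of_nonneg_of_le hf_nonneg hf_bound (hsummeas.mul_left _)
  -- find a cell of positive measure
  have hμuniv : 0 < μ Set.univ := by
    rw [hμ, stdCGauss, withDensity_apply _ MeasurableSet.univ, Measure.restrict_univ]
    rw [lintegral_pos_iff_support]
    · have hsupp : Function.support
          (fun h : EuclideanSpace ℂ (Fin t) =>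
            ENNReal.ofReal ((Real.pi ^ t)⁻¹ * Real.exp (-‖h‖ ^ 2))) = Set.univ := by
        ext h
        simp only [Function.support, Set.mem_setOf_eq, Set.mem_univ, iff_true, ne_eq]
        rw [← ENNReal.ofReal_zero]
        intro hcontra
        have hd : (0:ℝ) < (Real.pi ^ t)⁻¹ * Real.exp (-‖h‖ ^ 2) := by positivity
        rw [ENNReal.ofReal_eq_ofReal_iff hd.le le_rfl] at hcontra
        linarith
      rw [hsupp]
      exact (IsOpen.measure_pos volume isOpen_univ ⟨0, trivial⟩)
    · exact (ENNReal.measurable_ofReal.comp (by fun_prop))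
  have hex : ∃ n, 0 < μ (E n) := by
    by_contra hcon
    push_neg at hcon
    have : ∀ n, μ (E n) = 0 := fun n => le_antisymm (hcon n) zero_le
    rw [← hmeasure_sum] at hμuniv
    simp [this] at hμuniv
  obtain ⟨n0, hn0⟩ := hex
  -- strict inequality on the cell E n0
  have hstrict : ∫ h in E n0, g h ∂μ < ∫ h in E n0, f n0 h ∂μ := by
    have hdiff_int : IntegrableOn (fun h => f n0 h - g h) (E n0) μ :=
      ((hfint n0).sub hgint).integrableOn
    have hdiff_pos : 0 < ∫ h in E n0, (f n0 h - g h) ∂μ := by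
      rw [setIntegral_pos_iff_support_of_nonneg_ae
        (Filter.Eventually.of_forall fun h => sub_nonneg.2 (hpt n0 h)) hdiff_int]
      have hsub : E n0 \ (Submodule.span ℂ {x n0} : Set (EuclideanSpace ℂ (Fin t))) ⊆
          Function.support (fun h => f n0 h - g h) ∩ E n0 := by
        intro h ⟨hhE, hhS⟩
        exact ⟨sub_ne_zero.2 (hptstrict n0 h hhS).ne', hhE⟩
      calc (0:ENNReal) < μ (E n0) := hn0
        _ = μ (E n0 \ (Submodule.span ℂ {x n0} : Set (EuclideanSpace ℂ (Fin t)))) :=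
            (measure_diff_null (hspan_null n0)).symm
        _ ≤ μ (Function.support (fun h => f n0 h - g h) ∩ E n0) := measure_mono hsub
    have heq : ∫ h in E n0, (f n0 h - g h) ∂μ
        = (∫ h in E n0, f n0 h ∂μ) - ∫ h in E n0, g h ∂μ :=
      integral_sub (hfint n0).integrableOn hgint.integrableOn
    linarith [heq ▸ hdiff_pos]
  -- conclude
  have hle : ∀ n, ∫ h in E n, g h ∂μ ≤ ∫ h in E n, f n h ∂μ := fun n =>
    setIntegral_mono_on hgint.integrableOn (hfint n).integrableOn (hEmeas n)
      (fun h _ => hpt n h)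
  have := Summable.tsum_lt_tsum hle hstrict hsum_g.summable hsumf
  rw [hsum_g.tsum_eq] at this
  exact this
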